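/- Let e_S be a symmetric 3×3 tensor and n a unit vector in ℝ³ such that ((e_S × n)^T × n)^T = 0 (equivalently, the tangential–tangential part of e_S vanishes: (I − n⊗n) e_S (I − n⊗n) = 0). Then there exists a vector g ∈ ℝ³ with e_S = (1/2)(g ⊗ n + n ⊗ g). -/
import Mathlib


open Matrix

noncomputable section

/-- Points of ℝ³. -/
abbrev E3 := Fin 3 → ℝ

/-- The tangential projection I − n ⊗ n. -/
def tanProj (n : E3) : Matrix (Fin 3) (Fin 3) ℝ :=
  1 - Matrix.vecMulVec n n

/-- a symmetric tensor e whose tangential–tangential part vanishes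
((I − n⊗n) e (I − n⊗n) = 0 for a unit vector n) has the form
e = (1/2)(g ⊗ n + n ⊗ g) for some vector g. -/
theorem tangential_free_symmetric_decomposition
    (e : Matrix (Fin 3) (Fin 3) ℝ) (n : E3)
    (hsym : eᵀ = e) (hn : ∑ i, n i * n i = 1)
    (h : tanProj n * e * tanProj n = 0) :
    ∃ g : E3, e = (1/2 : ℝ) • (Matrix.vecMulVec g n + Matrix.vecMulVec n g) := by
  have hs01 : e 1 0 = e 0 1 := by
    have := congrFun (congrFun hsym 0) 1; simpa [Matrix.transpose_apply] using this
  have hs02 : e 2 0 = e 0 2 := by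
    have := congrFun (congrFun hsym 0) 2; simpa [Matrix.transpose_apply] using this
  have hs12 : e 2 1 = e 1 2 := by
    have := congrFun (congrFun hsym 1) 2; simpa [Matrix.transpose_apply] using this
  refine ⟨fun i => 2 * (∑ k, e i k * n k) - (∑ k, ∑ l, e k l * n l * n k) * n i, ?_⟩
  ext i j
  have hp := congrFun (congrFun h i) j
  fin_cases i <;> fin_cases j <;>
    simp [tanProj, Matrix.mul_apply, Matrix.vecMulVec_apply, Fin.sum_univ_three,
      Matrix.one_apply, Matrix.sub_apply] at hp ⊢ <;>
    simp only [hs01, hs02, hs12] at hp ⊢ <;>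
    linear_combination hp
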